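/- Let n ≥ 2 and let (T, A(T), B(T)) be a clean d-sparse signed tree model of an n-vertex finite simple graph G. Then G admits a 4·d·(log₂ n)²-sparse signed tree model (R, A(R), B(R)) of depth ⌈log₂ n⌉ + 1, where R is the full complete binary rooted tree with n leaves. -/

import Mathlib

/-- `G` has degeneracy at most `d`: every nonempty (induced) subgraph has a vertex of degree
at most `d`. -/
def DegenLE {V : Type*} (G : SimpleGraph V) (d : ℕ) : Prop :=
  ∀ s : Set V, s.Nonempty → ∃ v ∈ s, (G.neighborSet v ∩ s).ncard ≤ d

/-- Full rooted binary trees: every internal node has exactly two children. -/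
inductive BinTree where
  | leaf : BinTree
  | node : BinTree → BinTree → BinTree
deriving DecidableEq

namespace BinTree

/-- The subtree of a binary tree rooted at the node addressed by the path `p` from the root
(`false` = go to the left child, `true` = go to the right child), if it exists. -/
def subtreeAt : BinTree → List Bool → Option BinTree
  | t, [] => some t
  | leaf, _ :: _ => none
  | node l _, false :: p => l.subtreeAt p
  | node _ r, true :: p => r.subtreeAt p

/-- `p` addresses a node of `T`. -/
def IsNode (T : BinTree) (p : List Bool) : Prop := (T.subtreeAt p).isSome

/-- `p` addresses a leaf of `T`. -/
def IsLeafPos (T : BinTree) (p : List Bool) : Prop := T.subtreeAt p = some leaf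

/-- The depth of a binary tree: the maximum number of nodes on a root-to-leaf path. -/
def depth : BinTree → ℕ
  | leaf => 1
  | node l r => max l.depth r.depth + 1

/-- The total number of nodes of a binary tree. -/
def numNodes : BinTree → ℕ
  | leaf => 1
  | node l r => l.numNodes + r.numNodes + 1

/-- The list of (addresses of) leaves of a binary tree, read from left to right. -/
def leaves : BinTree → List (List Bool)
  | leaf => [[]]
  | node l r => l.leaves.map (false :: ·) ++ r.leaves.map (true :: ·)

/-- A binary tree is perfect if all its leaves are at the same depth. -/
def IsPerfect : BinTree → Prop
  | leaf => True
  | node l r => l.IsPerfect ∧ r.IsPerfect ∧ l.depth = r.depth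

/-- A binary tree is complete if all its levels are completely filled, except possibly the
last one, wherein leaves are left-aligned. -/
inductive IsComplete : BinTree → Prop
  | leaf : IsComplete leaf
  | nodeLeft (l r : BinTree) : IsComplete l → r.IsPerfect → l.depth = r.depth + 1 →
      IsComplete (node l r)
  | nodeRight (l r : BinTree) : l.IsPerfect → IsComplete r → l.depth = r.depth →
      IsComplete (node l r)

/-- With the leaves of `T` numbered `1, …, n` from left to right, `T.leafSet x` is the set of
numbers of the leaves of the subtree of `T` rooted at `x`. -/
def leafSet (T : BinTree) (x : List Bool) : Set ℕ :=
  {k | 1 ≤ k ∧ k ≤ T.leaves.length ∧ x <+: T.leaves.getD (k - 1) []}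

end BinTree

/-- Node addresses in a binary tree. -/
abbrev Pos := List Bool

/-- `u` is a strict ancestor of `v` (as tree addresses: a strict prefix). -/
def SAnc (u v : Pos) : Prop := u <+: v ∧ u ≠ v

/-- `{u, v}` is a transversal pair of `T`: both are nodes of `T` and neither is an ancestor
of the other. -/
def Transversal (T : BinTree) (u v : Pos) : Prop :=
  T.IsNode u ∧ T.IsNode v ∧ ¬ u <+: v ∧ ¬ v <+: u

/-- The ancestor relation on unordered pairs: `{u, v} ⪯ {u', v'}`. -/
def PairLE (u v u' v' : Pos) : Prop :=
  (u <+: u' ∧ v <+: v') ∨ (v <+: u' ∧ u <+: v')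

/-- A signed tree model: a full binary rooted tree `T` together with disjoint sets `A`
(transversal anti-edges) and `B` (transversal edges) of transversal pairs of `T`, no two of
which cross. -/
structure STM where
  tree : BinTree
  A : Set (Sym2 Pos)
  B : Set (Sym2 Pos)
  disjAB : Disjoint A B
  transversal : ∀ e ∈ A ∪ B, ∀ u v : Pos, e = s(u, v) → Transversal tree u v
  noCross : ∀ e ∈ A ∪ B, ∀ e' ∈ A ∪ B, ∀ u v u' v' : Pos,
    e = s(u, v) → e' = s(u', v') → ¬ (SAnc u u' ∧ SAnc v' v)

namespace STM

/-- The adjacency relation defined by a signed tree model on the leaves of its tree: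
leaves `u, v` are adjacent iff there is `{u', v'} ∈ B` with `{u', v'} ⪯ {u, v}` and no
`{u'', v''} ∈ A` satisfies `{u', v'} ≺ {u'', v''} ⪯ {u, v}`. -/
def LeafAdj (M : STM) (u v : Pos) : Prop :=
  M.tree.IsLeafPos u ∧ M.tree.IsLeafPos v ∧
  ∃ u' v' : Pos, s(u', v') ∈ M.B ∧ PairLE u' v' u v ∧
    ¬ ∃ u'' v'' : Pos, s(u'', v'') ∈ M.A ∧ PairLE u' v' u'' v'' ∧
      s(u', v') ≠ s(u'', v'') ∧ PairLE u'' v'' u v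

/-- `M` is a signed tree model of the graph `G`: there is a bijection between the vertices of
`G` and the leaves of the tree of `M` under which adjacency in `G` coincides with the
adjacency defined by `M`. -/
def Models {V : Type*} (M : STM) (G : SimpleGraph V) : Prop :=
  ∃ f : V → Pos, Function.Injective f ∧ (∀ v, M.tree.IsLeafPos (f v)) ∧
    (∀ p : Pos, M.tree.IsLeafPos p → ∃ v, f v = p) ∧
    ∀ u v : V, G.Adj u v ↔ M.LeafAdj (f u) (f v)

/-- The auxiliary graph of a signed tree model: vertex set the nodes of the tree, edge set
`A ∪ B`. -/
def auxGraph (M : STM) : SimpleGraph Pos where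
  Adj u v := u ≠ v ∧ s(u, v) ∈ M.A ∪ M.B
  symm := ⟨by
    rintro u v ⟨h1, h2⟩
    exact ⟨h1.symm, by rwa [Sym2.eq_swap]⟩⟩
  loopless := ⟨fun u h => h.1 rfl⟩

/-- The width of a signed tree model is at most `d`: the graph on the nodes of the tree with
edge set `A ∪ B` has degeneracy at most `d`. -/
def WidthLE (M : STM) (d : ℕ) : Prop := DegenLE M.auxGraph d

/-- A signed tree model is clean if every pair of siblings is in `A ∪ B`. -/
def Clean (M : STM) : Prop :=
  ∀ p : Pos, M.tree.IsNode (p ++ [false]) →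
    s(p ++ [false], p ++ [true]) ∈ M.A ∪ M.B

end STM


namespace BinTree

/-- number of leaves -/
def nl : BinTree → ℕ
  | leaf => 1
  | node l r => l.nl + r.nl

lemma nl_pos (X : BinTree) : 1 ≤ X.nl := by
  induction X with
  | leaf => simp [nl]
  | node l r ihl ihr => simp [nl]; omega

lemma leaves_length (X : BinTree) : X.leaves.length = X.nl := by
  induction X with
  | leaf => rfl
  | node l r ihl ihr => simp [leaves, nl, ihl, ihr]

lemma numNodes_eq (X : BinTree) : X.numNodes = 2 * X.nl - 1 := by
  induction X with
  | leaf => rfl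
  | node l r ihl ihr =>
    have := l.nl_pos; have := r.nl_pos
    simp [numNodes, nl, ihl, ihr]; omega

lemma subtreeAt_append (X : BinTree) (p q : List Bool) :
    X.subtreeAt (p ++ q) = (X.subtreeAt p).bind (fun Y => Y.subtreeAt q) := by
  induction p generalizing X with
  | nil => simp [subtreeAt]
  | cons b p ih =>
    cases X with
    | leaf => simp [subtreeAt]
    | node l r => cases b <;> simp [subtreeAt, ih]

lemma IsNode.of_prefix {X : BinTree} {p q : List Bool} (h : X.IsNode q) (hpq : p <+: q) :
    X.IsNode p := by
  obtain ⟨t, rfl⟩ := hpq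
  rw [IsNode, subtreeAt_append] at h
  rw [IsNode]
  cases hX : X.subtreeAt p with
  | none => rw [hX] at h; simp at h
  | some Y => simp

lemma IsLeafPos.isNode {X : BinTree} {p : List Bool} (h : X.IsLeafPos p) : X.IsNode p := by
  rw [IsNode, h]; rfl

lemma IsLeafPos.eq_of_prefix {X : BinTree} {p q : List Bool} (h : X.IsLeafPos p)
    (hn : X.IsNode q) (hpq : p <+: q) : q = p := by
  obtain ⟨t, rfl⟩ := hpq
  rw [IsNode, subtreeAt_append, h] at hn
  cases t with
  | nil => simp
  | cons b t => simp [subtreeAt, Option.bind] at hn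

/-- position of the k-th leaf (0-based) -/
def pos : BinTree → ℕ → List Bool
  | leaf, _ => []
  | node l r, k => if k < l.nl then false :: l.pos k else true :: r.pos (k - l.nl)

lemma pos_isLeafPos (X : BinTree) (k : ℕ) (hk : k < X.nl) : X.IsLeafPos (X.pos k) := by
  induction X generalizing k with
  | leaf => rfl
  | node l r ihl ihr =>
    rw [pos]
    by_cases h : k < l.nl
    · simpa [h, IsLeafPos, subtreeAt] using ihl k h
    · simp only [nl] at hk
      simpa [h, IsLeafPos, subtreeAt] using ihr (k - l.nl) (by omega)

/-- start of the interval of leaves under node p -/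
def lo : BinTree → List Bool → ℕ
  | _, [] => 0
  | leaf, _ :: _ => 0
  | node l _, false :: p => l.lo p
  | node l r, true :: p => l.nl + r.lo p

/-- size of the interval of leaves under node p -/
def sz (X : BinTree) (p : List Bool) : ℕ := ((X.subtreeAt p).getD leaf).nl

lemma sz_pos (X : BinTree) (p : List Bool) : 1 ≤ X.sz p := nl_pos _

lemma sz_nil (X : BinTree) : X.sz [] = X.nl := by simp [sz, subtreeAt]

lemma sz_node_false (l r : BinTree) (p : List Bool) :
    (node l r).sz (false :: p) = l.sz p := rfl

lemma sz_node_true (l r : BinTree) (p : List Bool) :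
    (node l r).sz (true :: p) = r.sz p := rfl

lemma lo_add_sz_le {X : BinTree} {x : List Bool} (hx : X.IsNode x) :
    X.lo x + X.sz x ≤ X.nl := by
  induction x generalizing X with
  | nil => simp [lo, sz_nil]
  | cons b x ih =>
    cases X with
    | leaf => rw [IsNode, subtreeAt] at hx; simp at hx
    | node l r =>
      cases b with
      | false =>
        have := ih (X := l) hx
        rw [lo, sz_node_false]; simp [nl]; omega
      | true =>
        have := ih (X := r) hx
        rw [lo, sz_node_true]; simp [nl]; omega

/-- the key interval characterization: for a node x, the leaves under x are exactly
the leaf indices in [lo x, lo x + sz x). -/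
lemma ivl_spec {X : BinTree} {x : List Bool} (hx : X.IsNode x) (k : ℕ) :
    (x <+: X.pos k ∧ k < X.nl) ↔ (X.lo x ≤ k ∧ k < X.lo x + X.sz x) := by
  induction x generalizing X k with
  | nil =>
    simp [lo, sz_nil, List.nil_prefix]
  | cons b x ih =>
    cases X with
    | leaf => rw [IsNode, subtreeAt] at hx; simp at hx
    | node l r =>
      cases b with
      | false =>
        have hx' : l.IsNode x := hx
        rw [lo, sz_node_false]
        constructor
        · rintro ⟨hpre, hk⟩
          rw [pos] at hpre
          by_cases h : k < l.nl
          · simp only [h, if_true, List.cons_prefix_cons] at hpre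
            have := (ih hx' (X := l) k).mp ⟨hpre.2, h⟩
            exact this
          · simp [h] at hpre
        · rintro ⟨h1, h2⟩
          have hk : k < l.nl := by
            have := lo_add_sz_le (X := l) hx'
            omega
          have := (ih hx' (X := l) k).mpr ⟨h1, h2⟩
          refine ⟨?_, ?_⟩
          · rw [pos]; simp [hk, this.1]
          · simp [nl]; omega
      | true =>
        have hx' : r.IsNode x := hx
        rw [lo, sz_node_true]
        constructor
        · rintro ⟨hpre, hk⟩
          rw [pos] at hpre
          by_cases h : k < l.nl
          · simp [h] at hpre
          · simp only [h, if_false, List.cons_prefix_cons] at hpre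
            have hk' : k - l.nl < r.nl := by simp only [nl] at hk; omega
            have := (ih hx' (X := r) (k - l.nl)).mp ⟨hpre.2, hk'⟩
            omega
        · rintro ⟨h1, h2⟩
          have := (ih hx' (X := r) (k - l.nl)).mpr ⟨by omega, by omega⟩
          have hk : ¬ k < l.nl := by omega
          refine ⟨?_, ?_⟩
          · rw [pos]; simp [hk, this.1]
          · have hk' : k - l.nl < r.nl := by omega
            simp [nl]; omega

end BinTree

namespace BinTree

lemma sz_of_leafPos {X : BinTree} {p : List Bool} (h : X.IsLeafPos p) : X.sz p = 1 := by
  rw [sz, h]; rfl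

lemma self_prefix_pos_lo {X : BinTree} {x : List Bool} (hx : X.IsNode x) :
    x <+: X.pos (X.lo x) ∧ X.lo x < X.nl := by
  have := (ivl_spec hx (X.lo x)).mpr ⟨le_rfl, by have := X.sz_pos x; omega⟩
  exact this

lemma leafPos_eq_pos {X : BinTree} {p : List Bool} (h : X.IsLeafPos p) :
    p = X.pos (X.lo p) ∧ X.lo p < X.nl := by
  obtain ⟨h1, h2⟩ := self_prefix_pos_lo h.isNode
  exact ⟨(h.eq_of_prefix (X.pos_isLeafPos _ h2).isNode h1).symm, h2⟩

lemma lo_pos {X : BinTree} {k : ℕ} (hk : k < X.nl) : X.lo (X.pos k) = k := by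
  have h := X.pos_isLeafPos k hk
  have := (ivl_spec h.isNode k).mp ⟨List.prefix_refl _, hk⟩
  have hsz := sz_of_leafPos h
  omega

lemma pos_inj {X : BinTree} {k₁ k₂ : ℕ} (h₁ : k₁ < X.nl) (h₂ : k₂ < X.nl)
    (h : X.pos k₁ = X.pos k₂) : k₁ = k₂ := by
  rw [← lo_pos h₁, ← lo_pos h₂, h]

lemma prefix_pos_iff {X : BinTree} {x : List Bool} (hx : X.IsNode x) {k : ℕ} (hk : k < X.nl) :
    x <+: X.pos k ↔ (X.lo x ≤ k ∧ k < X.lo x + X.sz x) := by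
  rw [← ivl_spec hx k]; tauto

lemma depth_pos' (X : BinTree) : 1 ≤ X.depth := by
  cases X <;> simp [depth]

/-- perfect implies complete -/
lemma IsPerfect.isComplete {X : BinTree} (h : X.IsPerfect) : X.IsComplete := by
  induction X with
  | leaf => exact IsComplete.leaf
  | node l r ihl ihr =>
    obtain ⟨hl, hr, hd⟩ := h
    exact IsComplete.nodeRight l r hl (ihr hr) hd

lemma IsPerfect.nl_eq {X : BinTree} (h : X.IsPerfect) : X.nl = 2 ^ (X.depth - 1) := by
  induction X with
  | leaf => rfl
  | node l r ihl ihr =>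
    obtain ⟨hl, hr, hd⟩ := h
    have hl1 := l.depth_pos'
    have hr1 := r.depth_pos'
    rw [nl, depth, ihl hl, ihr hr, hd]
    simp only [max_self]
    have h2 : r.depth + 1 - 1 = (r.depth - 1) + 1 := by omega
    rw [h2, pow_succ]
    omega

lemma IsComplete.nl_le {X : BinTree} (h : X.IsComplete) : X.nl ≤ 2 ^ (X.depth - 1) := by
  induction h with
  | leaf => simp [nl, depth]
  | nodeLeft l r hl hr hd ih =>
    have h1 := hr.nl_eq
    have h2 := r.depth_pos'
    rw [nl, depth, hd]
    simp only [max_eq_left (by omega : r.depth ≤ r.depth + 1)]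
    have : r.depth + 1 + 1 - 1 = (r.depth - 1) + 2 := by omega
    rw [this, pow_succ, pow_succ]
    have : l.depth - 1 = r.depth - 1 + 1 := by omega
    rw [this, pow_succ] at ih
    omega
  | nodeRight l r hl hr hd ih =>
    have h1 := hl.nl_eq
    have h2 := r.depth_pos'
    rw [nl, depth, hd]
    simp only [max_self]
    have : r.depth + 1 - 1 = (r.depth - 1) + 1 := by omega
    rw [this, pow_succ]
    rw [hd] at h1
    omega

lemma IsComplete.two_nl_ge {X : BinTree} (h : X.IsComplete) : 2 ^ (X.depth - 1) ≤ 2 * X.nl := by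
  induction h with
  | leaf => simp [nl, depth]
  | nodeLeft l r hl hr hd ih =>
    have h1 := hr.nl_eq
    have h2 := r.depth_pos'
    rw [nl, depth, hd]
    simp only [max_eq_left (by omega : r.depth ≤ r.depth + 1)]
    have : r.depth + 1 + 1 - 1 = (r.depth - 1) + 2 := by omega
    rw [this, pow_succ, pow_succ]
    have h3 : l.depth - 1 = r.depth - 1 + 1 := by omega
    rw [h3, pow_succ] at ih
    omega
  | nodeRight l r hl hr hd ih =>
    have h1 := hl.nl_eq
    have h2 := r.depth_pos'
    have h0 := r.nl_pos
    rw [nl, depth, hd]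
    simp only [max_self]
    have : r.depth + 1 - 1 = (r.depth - 1) + 1 := by omega
    rw [this, pow_succ]
    rw [hd] at h1
    omega

end BinTree

namespace BinTree

lemma two_pow_pred (k : ℕ) (hk : 1 ≤ k) : (2:ℕ)^k = 2^(k-1) * 2 := by
  conv_lhs => rw [show k = (k-1)+1 by omega]
  rw [pow_succ]

/-- number of leaves of the left subtree of the complete tree with m leaves -/
def lhalf (m : ℕ) : ℕ := min (2^(Nat.clog 2 m - 1)) (m - 2^(Nat.clog 2 m - 2))

lemma lhalf_bounds {m : ℕ} (hm : 2 ≤ m) : 1 ≤ lhalf m ∧ lhalf m ≤ m - 1 := by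
  set k := Nat.clog 2 m with hk
  have hk1 : 1 ≤ k := Nat.clog_pos (by norm_num) hm
  have hlb : 2 ^ (k-1) < m := Nat.pow_pred_clog_lt_self (by norm_num) (by omega)
  have h1 : 1 ≤ (2:ℕ)^(k-1) := Nat.one_le_two_pow
  have h2 : 1 ≤ (2:ℕ)^(k-2) := Nat.one_le_two_pow
  have h3 : (2:ℕ)^(k-2) ≤ 2^(k-1) := Nat.pow_le_pow_right (by norm_num) (by omega)
  rw [lhalf, ← hk]
  have hmr := min_le_right ((2:ℕ)^(k-1)) (m - 2^(k-2))
  exact ⟨le_min h1 (by omega), by omega⟩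

def cbtA : ℕ → ℕ → BinTree
  | 0, _ => leaf
  | fuel+1, m => if m ≤ 1 then leaf else node (cbtA fuel (lhalf m)) (cbtA fuel (m - lhalf m))

/-- the complete binary tree with m leaves (m ≥ 1) -/
def cbt (m : ℕ) : BinTree := cbtA m m

lemma cbtA_le_one {fuel m : ℕ} (h : m ≤ 1) : cbtA fuel m = leaf := by
  cases fuel <;> simp [cbtA, h]

lemma cbtA_congr : ∀ m fuel₁ fuel₂, m ≤ fuel₁ → m ≤ fuel₂ → cbtA fuel₁ m = cbtA fuel₂ m := by
  intro m
  induction m using Nat.strong_induction_on with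
  | _ m ih =>
  intro fuel₁ fuel₂ h₁ h₂
  by_cases hm : m ≤ 1
  · rw [cbtA_le_one hm, cbtA_le_one hm]
  · push_neg at hm
    obtain ⟨f₁, rfl⟩ : ∃ f, fuel₁ = f + 1 := ⟨fuel₁ - 1, by omega⟩
    obtain ⟨f₂, rfl⟩ : ∃ f, fuel₂ = f + 1 := ⟨fuel₂ - 1, by omega⟩
    obtain ⟨hb1, hb2⟩ := lhalf_bounds hm
    rw [cbtA, cbtA, if_neg (by omega), if_neg (by omega)]
    rw [ih (lhalf m) (by omega) f₁ f₂ (by omega) (by omega),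
        ih (m - lhalf m) (by omega) f₁ f₂ (by omega) (by omega)]

lemma cbt_eq_node {m : ℕ} (hm : 2 ≤ m) :
    cbt m = node (cbt (lhalf m)) (cbt (m - lhalf m)) := by
  obtain ⟨hb1, hb2⟩ := lhalf_bounds hm
  obtain ⟨f, rfl⟩ : ∃ f, m = f + 1 := ⟨m - 1, by omega⟩
  rw [cbt, cbtA, if_neg (by omega)]
  rw [cbt, cbt, cbtA_congr (lhalf (f+1)) f (lhalf (f+1)) (by omega) le_rfl,
      cbtA_congr ((f+1) - lhalf (f+1)) f _ (by omega) le_rfl]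

lemma cbt_one : cbt 1 = leaf := by rw [cbt, cbtA_le_one le_rfl]

lemma cbt_spec : ∀ m : ℕ, 1 ≤ m →
    (cbt m).nl = m ∧ (cbt m).depth = Nat.clog 2 m + 1 ∧ (cbt m).IsComplete ∧
    (m = 2 ^ (Nat.clog 2 m) → (cbt m).IsPerfect) := by
  intro m
  induction m using Nat.strong_induction_on with
  | _ m ih =>
  intro hm
  by_cases hm1 : m ≤ 1
  · have : m = 1 := by omega
    subst this
    rw [cbt_one]
    refine ⟨rfl, by simp [depth], IsComplete.leaf, fun _ => trivial⟩
  · push_neg at hm1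
    have hm2 : 2 ≤ m := hm1
    set k := Nat.clog 2 m with hk
    have hk1 : 1 ≤ k := Nat.clog_pos (by norm_num) hm2
    have hub : m ≤ 2 ^ k := (Nat.clog_le_iff_le_pow (by norm_num)).mp le_rfl
    have hlb : 2 ^ (k-1) < m := Nat.pow_pred_clog_lt_self (by norm_num) (by omega)
    set a := lhalf m with hadef
    set b := m - a with hbdef
    obtain ⟨ha1, ha2⟩ := lhalf_bounds hm2
    rw [← hadef] at ha1 ha2
    have hb1 : 1 ≤ b := by omega
    have hcbt := cbt_eq_node hm2
    rw [← hadef, ← hbdef] at hcbt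
    obtain ⟨hanl, hadep, hacomp, haperf⟩ := ih a (by omega) ha1
    obtain ⟨hbnl, hbdep, hbcomp, hbperf⟩ := ih b (by omega) hb1
    have hnl : (cbt m).nl = m := by rw [hcbt, nl, hanl, hbnl]; omega
    have hp1 : 1 ≤ (2:ℕ)^(k-1) := Nat.one_le_two_pow
    have hp2 : 1 ≤ (2:ℕ)^(k-2) := Nat.one_le_two_pow
    have hp3 : (2:ℕ)^(k-2) ≤ 2^(k-1) := Nat.pow_le_pow_right (by norm_num) (by omega)
    rcases eq_or_lt_of_le hk1 with hk1' | hk2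
    · -- k = 1, m = 2
      have hm0 : m = 2 := by
        rw [← hk1'] at hlb hub
        simp at hlb hub
        omega
      have hak : a = 1 := by
        rw [hadef, lhalf, ← hk, ← hk1']
        norm_num
        omega
      have hbk : b = 1 := by omega
      rw [hak] at hadep hacomp haperf hcbt
      rw [hbk] at hbdep hbcomp hbperf hcbt
      rw [cbt_one] at hadep hacomp haperf hcbt hbdep hbcomp hbperf
      refine ⟨hnl, ?_, ?_, ?_⟩
      · rw [hcbt, depth, ← hk1']; simp [depth]
      · rw [hcbt]
        exact IsComplete.nodeRight _ _ trivial IsComplete.leaf rfl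
      · intro _
        rw [hcbt]
        exact ⟨trivial, trivial, rfl⟩
    · -- k ≥ 2
      have hk2' : 2 ≤ k := hk2
      have hpow : (2:ℕ)^(k-1) = 2^(k-2) * 2 := by
        have := two_pow_pred (k-1) (by omega)
        rwa [show k-1-1 = k-2 by omega] at this
      have hpowk : (2:ℕ)^k = 2^(k-1) * 2 := two_pow_pred k (by omega)
      by_cases hcase : m ≤ 3 * 2^(k-2)
      · -- a = m - 2^(k-2), b = 2^(k-2)
        have ha : a = m - 2^(k-2) := by
          rw [hadef, lhalf, ← hk]
          exact min_eq_right (by omega)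
        have hb : b = 2^(k-2) := by omega
        have haclog : Nat.clog 2 a = k - 1 := by
          have hle : Nat.clog 2 a ≤ k - 1 := (Nat.clog_le_iff_le_pow (by norm_num)).mpr (by omega)
          have hgt : k - 2 < Nat.clog 2 a := (Nat.lt_clog_iff_pow_lt (by norm_num)).mpr (by omega)
          omega
        have hbclog : Nat.clog 2 b = k - 2 := by rw [hb, Nat.clog_pow _ _ (by norm_num)]
        have hbp : (cbt b).IsPerfect := hbperf (by rw [hbclog, ← hb])
        have hadep' : (cbt a).depth = k := by rw [hadep, haclog]; omega
        have hbdep' : (cbt b).depth = k - 1 := by rw [hbdep, hbclog]; omega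
        refine ⟨hnl, ?_, ?_, ?_⟩
        · rw [hcbt, depth, hadep', hbdep']
          have : max k (k-1) = k := by omega
          rw [this]
        · rw [hcbt]
          exact IsComplete.nodeLeft _ _ hacomp hbp (by rw [hadep', hbdep']; omega)
        · intro hper
          exfalso
          have h4 : (2:ℕ)^k = 2^(k-2) * 4 := by
            conv_lhs => rw [show k = (k-2)+2 by omega]
            rw [pow_add]; norm_num
          omega
      · -- a = 2^(k-1), b = m - 2^(k-1)
        push_neg at hcase
        have ha : a = 2^(k-1) := by
          rw [hadef, lhalf, ← hk]
          exact min_eq_left (by omega)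
        have haclog : Nat.clog 2 a = k - 1 := by rw [ha, Nat.clog_pow _ _ (by norm_num)]
        have hap : (cbt a).IsPerfect := haperf (by rw [haclog, ← ha])
        have hbk : b = m - 2^(k-1) := by omega
        have hbclog : Nat.clog 2 b = k - 1 := by
          have hle : Nat.clog 2 b ≤ k - 1 := (Nat.clog_le_iff_le_pow (by norm_num)).mpr (by omega)
          have hgt : k - 2 < Nat.clog 2 b := (Nat.lt_clog_iff_pow_lt (by norm_num)).mpr (by omega)
          omega
        have hadep' : (cbt a).depth = k := by rw [hadep, haclog]; omega
        have hbdep' : (cbt b).depth = k := by rw [hbdep, hbclog]; omega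
        refine ⟨hnl, ?_, ?_, ?_⟩
        · rw [hcbt, depth, hadep', hbdep']; simp
        · rw [hcbt]
          exact IsComplete.nodeRight _ _ hap hbcomp (by rw [hadep', hbdep'])
        · intro hper
          have hbp : (cbt b).IsPerfect := hbperf (by rw [hbclog]; omega)
          rw [hcbt]
          exact ⟨hap, hbp, by rw [hadep', hbdep']⟩

end BinTree

namespace BinTree

/-- canonical decomposition of the interval [s, e) of leaf indices into maximal subtrees -/
def decomp : BinTree → ℕ → ℕ → List (List Bool)
  | leaf, s, e => if s = 0 ∧ 1 ≤ e then [[]] else []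
  | node l r, s, e =>
    if e ≤ s ∨ l.nl + r.nl ≤ s then []
    else if s = 0 ∧ l.nl + r.nl ≤ e then [[]]
    else (l.decomp s e).map (false :: ·) ++ (r.decomp (s - l.nl) (e - l.nl)).map (true :: ·)

lemma decomp_isNode {X : BinTree} {s e : ℕ} {x : List Bool} (hx : x ∈ X.decomp s e) :
    X.IsNode x ∧ s ≤ X.lo x ∧ X.lo x + X.sz x ≤ e := by
  induction X generalizing s e x with
  | leaf =>
    rw [decomp] at hx
    split at hx
    · next h =>
      simp at hx
      subst hx
      exact ⟨by simp [IsNode, subtreeAt], by simp [lo, sz_nil, nl]; omega⟩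
    · simp at hx
  | node l r ihl ihr =>
    rw [decomp] at hx
    split at hx
    · simp at hx
    · next h1 =>
      push_neg at h1
      split at hx
      · next h2 =>
        simp at hx
        subst hx
        refine ⟨by simp [IsNode, subtreeAt], ?_⟩
        rw [lo, sz_nil]
        simp [nl]
        omega
      · next h2 =>
        simp only [List.mem_append, List.mem_map] at hx
        rcases hx with ⟨y, hy, rfl⟩ | ⟨y, hy, rfl⟩
        · obtain ⟨h3, h4, h5⟩ := ihl hy
          exact ⟨h3, by rw [lo, sz_node_false]; omega⟩
        · obtain ⟨h3, h4, h5⟩ := ihr hy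
          have h6 := lo_add_sz_le h3
          refine ⟨h3, ?_⟩
          rw [lo, sz_node_true]
          have : 1 ≤ r.sz y := r.sz_pos y
          omega

lemma decomp_cover {X : BinTree} {s e k : ℕ} (hk : k < X.nl) (hs : s ≤ k) (he : k < e) :
    ∃ x ∈ X.decomp s e, x <+: X.pos k := by
  induction X generalizing s e k with
  | leaf =>
    simp only [nl] at hk
    refine ⟨[], ?_, List.nil_prefix⟩
    rw [decomp, if_pos ⟨by omega, by omega⟩]
    simp
  | node l r ihl ihr =>
    rw [decomp]
    rw [if_neg (by simp only [nl] at hk; push_neg; omega)]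
    by_cases h2 : s = 0 ∧ l.nl + r.nl ≤ e
    · rw [if_pos h2]
      exact ⟨[], by simp, List.nil_prefix⟩
    · rw [if_neg h2]
      simp only [nl] at hk
      by_cases hkl : k < l.nl
      · obtain ⟨x, hx1, hx2⟩ := ihl hkl hs he
        refine ⟨false :: x, ?_, ?_⟩
        · simp only [List.mem_append, List.mem_map]
          exact Or.inl ⟨x, hx1, rfl⟩
        · rw [pos, if_pos hkl]
          simpa using hx2
      · push_neg at hkl
        obtain ⟨x, hx1, hx2⟩ := ihr (s := s - l.nl) (e := e - l.nl) (k := k - l.nl) (by omega) (by omega) (by omega)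
        refine ⟨true :: x, ?_, ?_⟩
        · simp only [List.mem_append, List.mem_map]
          exact Or.inr ⟨x, hx1, rfl⟩
        · rw [pos, if_neg (by omega)]
          simpa using hx2

lemma decomp_maximal {X : BinTree} {s e : ℕ} {x : List Bool} (hx : x ∈ X.decomp s e)
    {q : List Bool} (hq : X.IsNode q) (hpre : q <+: x) (hne : q ≠ x) :
    ∃ k, (X.lo q ≤ k ∧ k < X.lo q + X.sz q) ∧ (k < s ∨ e ≤ k) := by
  induction X generalizing s e x q with
  | leaf =>
    rw [decomp] at hx
    split at hx
    · simp at hx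
      subst hx
      exact absurd (List.prefix_nil.mp hpre) hne
    · simp at hx
  | node l r ihl ihr =>
    rw [decomp] at hx
    split at hx
    · simp at hx
    · next h1 =>
      push_neg at h1
      split at hx
      · simp at hx
        subst hx
        exact absurd (List.prefix_nil.mp hpre) hne
      · next h2 =>
        simp only [List.mem_append, List.mem_map] at hx
        -- q = [] case
        rcases List.eq_nil_or_concat' q with rfl | _
        · refine ⟨if s = 0 then e else 0, ?_, ?_⟩
          · rw [lo, sz_nil]
            split <;> simp [nl] <;> omega
          · split
            · next h => right; exact le_rfl
            · next h => left; omega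
        · -- q = b :: q'
          obtain ⟨b, q', rfl⟩ : ∃ b q', q = b :: q' := by
            rcases q with _ | ⟨b, q'⟩
            · simp_all
            · exact ⟨b, q', rfl⟩
          rcases hx with ⟨y, hy, rfl⟩ | ⟨y, hy, rfl⟩
          · rcases b with _ | _
            · -- q = false :: q', x = false :: y
              rw [List.cons_prefix_cons] at hpre
              obtain ⟨k, hk1, hk2⟩ := ihl hy hq hpre.2 (by simpa using hne)
              exact ⟨k, by rw [lo, sz_node_false]; exact hk1, hk2⟩
            · rw [List.cons_prefix_cons] at hpre
              simp at hpre
          · rcases b with _ | _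
            · rw [List.cons_prefix_cons] at hpre
              simp at hpre
            · rw [List.cons_prefix_cons] at hpre
              obtain ⟨k, hk1, hk2⟩ := ihr hy hq hpre.2 (by simpa using hne)
              refine ⟨l.nl + k, ?_, ?_⟩
              · rw [lo, sz_node_true]
                omega
              · rcases hk2 with h | h
                · left; omega
                · right
                  rcases le_or_gt e l.nl with h' | h'
                  · omega
                  · omega
    
end BinTree

namespace BinTree

lemma decomp_empty {X : BinTree} {s e : ℕ} (h : e ≤ s ∨ X.nl ≤ s) : X.decomp s e = [] := by
  cases X with
  | leaf =>
    rw [decomp, if_neg]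
    rintro ⟨rfl, h1⟩
    simp [nl] at h
    omega
  | node l r =>
    rw [decomp, if_pos]
    simpa [nl] using h

lemma decomp_whole {X : BinTree} {e : ℕ} (h : X.nl ≤ e) : X.decomp 0 e = [[]] := by
  have h1 := X.nl_pos
  cases X with
  | leaf => rw [decomp, if_pos ⟨rfl, by simp [nl] at h; omega⟩]
  | node l r =>
    simp only [nl] at h h1
    rw [decomp, if_neg (by omega), if_pos ⟨rfl, h⟩]

lemma complete_node_facts {l r : BinTree} (h : (node l r).IsComplete) :
    l.IsComplete ∧ r.IsComplete ∧ r.nl ≤ l.nl ∧ 2 ^ (l.depth - 2) ≤ r.nl := by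
  cases h with
  | nodeLeft l r hl hr hd =>
    have h1 := hr.nl_eq
    have h2 := hl.two_nl_ge
    have h3 := r.depth_pos'
    refine ⟨hl, hr.isComplete, ?_, ?_⟩
    · rw [show l.depth - 1 = (r.depth - 1) + 1 by omega, pow_succ] at h2
      omega
    · rw [show l.depth - 2 = r.depth - 1 by omega]
      omega
  | nodeRight l r hl hr hd =>
    have h1 := hl.nl_eq
    have h2 := hr.nl_le
    have h3 := hr.two_nl_ge
    have h4 := r.depth_pos'
    rw [← hd] at h2 h3
    refine ⟨hl.isComplete, hr, by omega, ?_⟩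
    rcases Nat.lt_or_ge l.depth 2 with h5 | h5
    · rw [show l.depth - 2 = 0 by omega]
      simpa using r.nl_pos
    · rw [show l.depth - 1 = (l.depth - 2) + 1 by omega, pow_succ] at h3
      omega

lemma log_succ_le {t' b : ℕ} (ht : 1 ≤ t') (hb : 2 ^ Nat.log 2 t' ≤ b) :
    Nat.log 2 t' + 1 ≤ Nat.log 2 (t' + b) := by
  have h1 : 2 ^ Nat.log 2 t' ≤ t' := Nat.pow_log_le_self 2 (by omega)
  refine (Nat.le_log_iff_pow_le (by norm_num) (by omega)).mpr ?_
  rw [pow_succ]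
  omega

lemma decomp_len_suffix {X : BinTree} (hX : X.IsComplete) : ∀ s e, X.nl ≤ e → s < X.nl →
    (X.decomp s e).length ≤ Nat.log 2 (X.nl - s) + 1 := by
  induction X with
  | leaf => intro s e he hs; rw [decomp]; split <;> simp
  | node l r ihl ihr =>
    intro s e he hs
    obtain ⟨hcl, hcr, hlr, hpow⟩ := complete_node_facts hX
    simp only [nl] at he hs ⊢
    have h1 := l.nl_pos
    have h2 := r.nl_pos
    rw [decomp, if_neg (by omega)]
    by_cases h3 : s = 0 ∧ l.nl + r.nl ≤ e
    · rw [if_pos h3]; simp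
    · rw [if_neg h3]
      have hs1 : 1 ≤ s := by
        rcases Nat.eq_zero_or_pos s with rfl | h
        · exact absurd ⟨rfl, by omega⟩ h3
        · omega
      rw [List.length_append, List.length_map, List.length_map]
      by_cases h4 : l.nl ≤ s
      · rw [decomp_empty (X := l) (Or.inr h4), List.length_nil]
        have := ihr hcr (s - l.nl) (e - l.nl) (by omega) (by omega)
        rw [show r.nl - (s - l.nl) = l.nl + r.nl - s by omega] at this
        omega
      · push_neg at h4
        rw [show s - l.nl = 0 by omega, decomp_whole (X := r) (by omega),
            List.length_singleton]
        have hihl := ihl hcl s e (by omega) h4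
        set t' := l.nl - s with ht'
        have ht'1 : 1 ≤ t' := by omega
        have hjb : 2 ^ Nat.log 2 t' ≤ r.nl := by
          have ha : 2 ^ Nat.log 2 t' ≤ t' := Nat.pow_log_le_self 2 (by omega)
          have hc : l.nl ≤ 2 ^ (l.depth - 1) := hcl.nl_le
          have hlt : Nat.log 2 t' < l.depth - 1 :=
            (Nat.pow_lt_pow_iff_right (by norm_num : (1:ℕ) < 2)).mp
              (show 2 ^ Nat.log 2 t' < 2 ^ (l.depth - 1) by omega)
          calc 2 ^ Nat.log 2 t' ≤ 2 ^ (l.depth - 2) :=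
                Nat.pow_le_pow_right (by norm_num) (by omega)
          _ ≤ r.nl := hpow
        have := log_succ_le ht'1 hjb
        rw [show t' + r.nl = l.nl + r.nl - s by omega] at this
        omega

lemma decomp_len_prefix {X : BinTree} (hX : X.IsComplete) : ∀ e, 1 ≤ e →
    (X.decomp 0 e).length ≤ Nat.log 2 (min e X.nl) + 1 := by
  induction X with
  | leaf => intro e he; rw [decomp]; split <;> simp
  | node l r ihl ihr =>
    intro e he
    obtain ⟨hcl, hcr, hlr, hpow⟩ := complete_node_facts hX
    have h1 := l.nl_pos
    have h2 := r.nl_pos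
    by_cases h0 : (node l r).nl ≤ e
    · rw [decomp_whole h0]; simp
    · push_neg at h0
      simp only [nl] at h0 ⊢
      rw [decomp, if_neg (by omega), if_neg (by rintro ⟨_, h⟩; omega)]
      rw [List.length_append, List.length_map, List.length_map]
      rw [min_eq_left (by omega : e ≤ l.nl + r.nl)]
      by_cases h4 : e ≤ l.nl
      · rw [decomp_empty (X := r) (Or.inl (by omega)), List.length_nil]
        have := ihl hcl e he
        rw [min_eq_left h4] at this
        omega
      · push_neg at h4
        rw [Nat.zero_sub, decomp_whole (X := l) (e := e) (by omega), List.length_singleton]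
        have hihr := ihr hcr (e - l.nl) (by omega)
        set t'' := min (e - l.nl) r.nl with ht''
        have ht1 : 1 ≤ t'' := le_min (by omega) h2
        have hjb : 2 ^ Nat.log 2 t'' ≤ l.nl := by
          have ha : 2 ^ Nat.log 2 t'' ≤ t'' := Nat.pow_log_le_self 2 (by omega)
          have hbb : t'' ≤ r.nl := min_le_right _ _
          omega
        have hlog := log_succ_le ht1 hjb
        have hmono : Nat.log 2 (t'' + l.nl) ≤ Nat.log 2 e := by
          apply Nat.log_mono_right
          have : t'' ≤ e - l.nl := min_le_left _ _
          omega
        omega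

lemma decomp_len_split {X : BinTree} (hX : X.IsComplete) (s e : ℕ) :
    (X.decomp s e).length ≤ 1 ∨ ∃ t₁ t₂ : ℕ, 1 ≤ t₁ ∧ 1 ≤ t₂ ∧ t₁ + t₂ ≤ X.nl ∧
      (X.decomp s e).length ≤ (Nat.log 2 t₁ + 1) + (Nat.log 2 t₂ + 1) := by
  induction X generalizing s e with
  | leaf => left; rw [decomp]; split <;> simp
  | node l r ihl ihr =>
    obtain ⟨hcl, hcr, hlr, hpow⟩ := complete_node_facts hX
    have h1 := l.nl_pos
    have h2 := r.nl_pos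
    by_cases hemp : e ≤ s ∨ (node l r).nl ≤ s
    · left; rw [decomp_empty hemp]; simp
    · push_neg at hemp
      obtain ⟨hse, hsn⟩ := hemp
      simp only [nl] at hsn
      by_cases hwhole : s = 0 ∧ l.nl + r.nl ≤ e
      · left
        obtain ⟨rfl, hw⟩ := hwhole
        rw [decomp_whole (X := node l r) (by simpa [nl] using hw)]
        simp
      · rcases Nat.eq_zero_or_pos s with rfl | hs1
        · -- prefix case: e < nl
          right
          have he1 : e < l.nl + r.nl := by
            by_contra h
            exact hwhole ⟨rfl, by omega⟩
          have := decomp_len_prefix hX e (by omega)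
          rw [min_eq_left (by simp only [nl]; omega)] at this
          refine ⟨e, 1, by omega, le_rfl, by simp only [nl]; omega, ?_⟩
          simp only [Nat.log_one_right]
          omega
        · by_cases hes : l.nl + r.nl ≤ e
          · -- suffix case
            right
            have := decomp_len_suffix hX s e (by simp only [nl]; omega)
              (by simp only [nl]; omega)
            simp only [nl] at this
            refine ⟨l.nl + r.nl - s, 1, by omega, le_rfl, by simp only [nl]; omega, ?_⟩
            simp only [Nat.log_one_right]
            omega
          · -- middle case: 1 ≤ s < e < nl
            push_neg at hes
            rw [decomp, if_neg (by omega), if_neg (by rintro ⟨rfl, _⟩; omega)]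
            rw [List.length_append, List.length_map, List.length_map]
            by_cases h4 : e ≤ l.nl
            · -- all in left
              rw [decomp_empty (X := r) (Or.inl (by omega)), List.length_nil]
              rcases ihl hcl s e with h | ⟨t₁, t₂, ha, hb, hc, hd⟩
              · left; omega
              · right; exact ⟨t₁, t₂, ha, hb, by simp only [nl]; omega, by omega⟩
            · push_neg at h4
              by_cases h5 : l.nl ≤ s
              · -- all in right
                rw [decomp_empty (X := l) (Or.inr h5), List.length_nil]
                rcases ihr hcr (s - l.nl) (e - l.nl) with h | ⟨t₁, t₂, ha, hb, hc, hd⟩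
                · left; omega
                · right; exact ⟨t₁, t₂, ha, hb, by simp only [nl]; omega, by omega⟩
              · -- split
                push_neg at h5
                right
                rw [show s - l.nl = 0 by omega]
                have hsl := decomp_len_suffix hcl s e (by omega) h5
                have hpr := decomp_len_prefix hcr (e - l.nl) (by omega)
                refine ⟨l.nl - s, min (e - l.nl) r.nl, by omega,
                  le_min (by omega) (by omega), by simp only [nl]; omega, by omega⟩

lemma nat_log_le_logb (t : ℕ) (ht : 1 ≤ t) : (Nat.log 2 t : ℝ) ≤ Real.logb 2 t := by
  have h1 : (2:ℝ) ^ (Nat.log 2 t : ℕ) ≤ (t : ℝ) := by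
    exact_mod_cast Nat.pow_log_le_self 2 (by omega)
  have h2 : (0:ℝ) < t := by exact_mod_cast ht
  calc (Nat.log 2 t : ℝ) = Real.logb 2 ((2:ℝ) ^ (Nat.log 2 t : ℕ)) := by
        rw [Real.logb_pow]
        simp [Real.logb_self_eq_one]
  _ ≤ Real.logb 2 t :=
        (Real.logb_le_logb (by norm_num) (by positivity) h2).mpr h1

lemma one_le_logb {n : ℕ} (hn : 2 ≤ n) : 1 ≤ Real.logb 2 n := by
  have h2 : (0:ℝ) < n := by positivity
  have : Real.logb 2 2 ≤ Real.logb 2 n := by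
    apply (Real.logb_le_logb (by norm_num) (by norm_num) h2).mpr
    exact_mod_cast hn
  simpa [Real.logb_self_eq_one] using this

/-- the main counting bound: each decomposition has at most 2·log₂ n pieces. -/
lemma decomp_card_le {X : BinTree} (hX : X.IsComplete) (hn : 2 ≤ X.nl) (s e : ℕ) :
    ((X.decomp s e).length : ℝ) ≤ 2 * Real.logb 2 (X.nl) := by
  have hlogb := one_le_logb hn
  rcases decomp_len_split hX s e with h | ⟨t₁, t₂, h1, h2, h3, h4⟩
  · calc ((X.decomp s e).length : ℝ) ≤ 1 := by exact_mod_cast h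
    _ ≤ 2 * Real.logb 2 (X.nl) := by linarith
  · have l1 := nat_log_le_logb t₁ h1
    have l2 := nat_log_le_logb t₂ h2
    have hprod : (4 * t₁ * t₂ : ℕ) ≤ X.nl ^ 2 := by
      have h5 : (t₁ + t₂)^2 ≤ X.nl ^ 2 := Nat.pow_le_pow_left h3 2
      zify at h5 ⊢
      nlinarith [sq_nonneg ((t₁:ℤ) - (t₂:ℤ))]
    have hx : (0:ℝ) < ((4 * t₁ * t₂ : ℕ) : ℝ) := by
      have : 0 < 4 * t₁ * t₂ := Nat.mul_pos (Nat.mul_pos (by norm_num) h1) h2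
      exact_mod_cast this
    have hy : (0:ℝ) < ((X.nl ^ 2 : ℕ) : ℝ) := by
      have : 0 < X.nl ^ 2 := by positivity
      exact_mod_cast this
    have hlogprod : Real.logb 2 ((4 * t₁ * t₂ : ℕ) : ℝ) ≤ Real.logb 2 ((X.nl ^ 2 : ℕ) : ℝ) :=
      (Real.logb_le_logb (by norm_num) hx hy).mpr (by exact_mod_cast hprod)
    have e1 : Real.logb 2 ((4 * t₁ * t₂ : ℕ) : ℝ) = 2 + Real.logb 2 t₁ + Real.logb 2 t₂ := by
      push_cast
      rw [Real.logb_mul (mul_ne_zero (by norm_num) (Nat.cast_ne_zero.mpr (by omega)))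
            (Nat.cast_ne_zero.mpr (by omega)),
          Real.logb_mul (by norm_num) (Nat.cast_ne_zero.mpr (by omega))]
      have h4' : Real.logb 2 4 = 2 := by
        rw [show (4:ℝ) = 2^(2:ℕ) by norm_num, Real.logb_pow]
        simp [Real.logb_self_eq_one]
      rw [h4']
      try ring
    have e2 : Real.logb 2 ((X.nl ^ 2 : ℕ) : ℝ) = 2 * Real.logb 2 X.nl := by
      push_cast
      rw [Real.logb_pow]
      push_cast
      ring
    have hlen : ((X.decomp s e).length : ℝ) ≤ (Nat.log 2 t₁ : ℝ) + 1 + ((Nat.log 2 t₂ : ℝ) + 1) := by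
      exact_mod_cast h4
    rw [e1, e2] at hlogprod
    linarith

end BinTree

open BinTree

lemma prefix_antisymm' {p q : Pos} (h1 : p <+: q) (h2 : q <+: p) : p = q :=
  h1.eq_of_length (le_antisymm h1.length_le h2.length_le)

lemma pairLE_refl (u v : Pos) : PairLE u v u v := Or.inl ⟨List.prefix_refl u, List.prefix_refl v⟩

lemma pairLE_swap₁ {u v u' v' : Pos} (h : PairLE u v u' v') : PairLE v u u' v' := by
  rcases h with ⟨h1, h2⟩ | ⟨h1, h2⟩
  · exact Or.inr ⟨h1, h2⟩
  · exact Or.inl ⟨h1, h2⟩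

lemma pairLE_swap₂ {u v u' v' : Pos} (h : PairLE u v u' v') : PairLE u v v' u' := by
  rcases h with ⟨h1, h2⟩ | ⟨h1, h2⟩
  · exact Or.inr ⟨h2, h1⟩
  · exact Or.inl ⟨h2, h1⟩

lemma pairLE_congr {u v u' v' a b c d : Pos} (h1 : s(u,v) = s(a,b)) (h2 : s(u',v') = s(c,d))
    (h : PairLE u v u' v') : PairLE a b c d := by
  rw [Sym2.eq_iff] at h1 h2
  rcases h1 with ⟨rfl, rfl⟩ | ⟨rfl, rfl⟩ <;> rcases h2 with ⟨rfl, rfl⟩ | ⟨rfl, rfl⟩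
  · exact h
  · exact pairLE_swap₂ h
  · exact pairLE_swap₁ h
  · exact pairLE_swap₂ (pairLE_swap₁ h)

lemma pairLE_antisymm {u v u' v' : Pos} (huv : ¬ u <+: v ∧ ¬ v <+: u)
    (h1 : PairLE u v u' v') (h2 : PairLE u' v' u v) : s(u,v) = s(u',v') := by
  rcases h1 with ⟨a1, a2⟩ | ⟨a1, a2⟩ <;> rcases h2 with ⟨b1, b2⟩ | ⟨b1, b2⟩
  · rw [prefix_antisymm' a1 b1, prefix_antisymm' a2 b2]
  · exact absurd (a1.trans b2) huv.1
  · exact absurd (a1.trans b1) huv.2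
  · exact Sym2.eq_iff.mpr (Or.inr ⟨prefix_antisymm' a2 b1, prefix_antisymm' a1 b2⟩)

lemma pairLE_length {u v u' v' : Pos} (h : PairLE u v u' v') :
    u.length + v.length ≤ u'.length + v'.length := by
  rcases h with ⟨h1, h2⟩ | ⟨h1, h2⟩ <;>
    have := h1.length_le <;> have := h2.length_le <;> omega

lemma pairLE_length_lt {u v u' v' : Pos} (h : PairLE u v u' v') (hne : s(u,v) ≠ s(u',v')) :
    u.length + v.length < u'.length + v'.length := by
  rcases h with ⟨h1, h2⟩ | ⟨h1, h2⟩ <;> have l1 := h1.length_le <;> have l2 := h2.length_le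
  · rcases eq_or_lt_of_le l1 with he | he
    · rcases eq_or_lt_of_le l2 with he2 | he2
      · exact absurd (by rw [h1.eq_of_length he, h2.eq_of_length he2]) hne
      · omega
    · omega
  · rcases eq_or_lt_of_le l1 with he | he
    · rcases eq_or_lt_of_le l2 with he2 | he2
      · refine absurd ?_ hne
        rw [h1.eq_of_length he, h2.eq_of_length he2, Sym2.eq_swap]
      · omega
    · omega

/-- `e ⪯ e'` for unordered pairs. -/
def SymLE (e e' : Sym2 Pos) : Prop :=
  ∃ u v u' v' : Pos, e = s(u,v) ∧ e' = s(u',v') ∧ PairLE u v u' v'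

lemma symLE_elim {e e' : Sym2 Pos} {a b c d : Pos} (h : SymLE e e')
    (h1 : e = s(a,b)) (h2 : e' = s(c,d)) : PairLE a b c d := by
  obtain ⟨u, v, u', v', rfl, rfl, hp⟩ := h
  exact pairLE_congr h1 h2 hp

/-- measure for finding maximal pairs -/
def measS : Sym2 Pos → ℕ := Sym2.lift ⟨fun u v => u.length + v.length, fun a b => add_comm a.length b.length⟩

lemma measS_mk (u v : Pos) : measS s(u,v) = u.length + v.length := rfl

lemma symLE_measS_lt {e e' : Sym2 Pos} (h : SymLE e e') (hne : e ≠ e') :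
    measS e < measS e' := by
  obtain ⟨u, v, u', v', rfl, rfl, hp⟩ := h
  rw [measS_mk, measS_mk]
  exact pairLE_length_lt hp (by simpa using hne)

/-- `e` lies (weakly) below the pair of leaves `(P, Q)`. -/
def Below (e : Sym2 Pos) (P Q : Pos) : Prop := ∃ u v : Pos, e = s(u,v) ∧ u <+: P ∧ v <+: Q

namespace STM

lemma pair_not_prefix {N : STM} {e : Sym2 Pos} {u v : Pos} (he : e ∈ N.A ∪ N.B)
    (h : e = s(u,v)) : ¬ u <+: v ∧ ¬ v <+: u :=
  ⟨(N.transversal e he u v h).2.2.1, (N.transversal e he u v h).2.2.2⟩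

/-- any two pairs below the same leaf pair are comparable -/
lemma chain_below {N : STM} {e₁ e₂ : Sym2 Pos} {P Q u₁ v₁ u₂ v₂ : Pos}
    (h₁ : e₁ ∈ N.A ∪ N.B) (h₂ : e₂ ∈ N.A ∪ N.B)
    (r₁ : e₁ = s(u₁,v₁)) (r₂ : e₂ = s(u₂,v₂))
    (hu₁ : u₁ <+: P) (hv₁ : v₁ <+: Q) (hu₂ : u₂ <+: P) (hv₂ : v₂ <+: Q) :
    PairLE u₁ v₁ u₂ v₂ ∨ PairLE u₂ v₂ u₁ v₁ := by
  rcases List.prefix_or_prefix_of_prefix hu₁ hu₂ with hu | hu <;>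
    rcases List.prefix_or_prefix_of_prefix hv₁ hv₂ with hv | hv
  · exact Or.inl (Or.inl ⟨hu, hv⟩)
  · by_cases hueq : u₁ = u₂
    · subst hueq
      exact Or.inr (Or.inl ⟨List.prefix_refl _, hv⟩)
    · by_cases hveq : v₂ = v₁
      · subst hveq
        exact Or.inl (Or.inl ⟨hu, List.prefix_refl _⟩)
      · exact absurd ⟨⟨hu, hueq⟩, ⟨hv, hveq⟩⟩ (N.noCross e₁ h₁ e₂ h₂ u₁ v₁ u₂ v₂ r₁ r₂)
  · by_cases hueq : u₂ = u₁
    · subst hueq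
      exact Or.inl (Or.inl ⟨List.prefix_refl _, hv⟩)
    · by_cases hveq : v₁ = v₂
      · subst hveq
        exact Or.inr (Or.inl ⟨hu, List.prefix_refl _⟩)
      · exact absurd ⟨⟨hv, hveq⟩, ⟨hu, hueq⟩⟩
          (N.noCross e₁ h₁ e₂ h₂ v₁ u₁ v₂ u₂ (by rw [r₁, Sym2.eq_swap]) (by rw [r₂, Sym2.eq_swap]))
  · exact Or.inr (Or.inl ⟨hu, hv⟩)

/-- orienting a pair inequality along a leaf pair -/
lemma orient {N : STM} {e₁ e₂ : Sym2 Pos} {P Q u₁ v₁ u₂ v₂ : Pos}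
    (h₁ : e₁ ∈ N.A ∪ N.B) (h₂ : e₂ ∈ N.A ∪ N.B)
    (r₁ : e₁ = s(u₁,v₁)) (r₂ : e₂ = s(u₂,v₂))
    (hu₁ : u₁ <+: P) (hv₁ : v₁ <+: Q) (hu₂ : u₂ <+: P) (hv₂ : v₂ <+: Q)
    (hle : PairLE u₁ v₁ u₂ v₂) : u₁ <+: u₂ ∧ v₁ <+: v₂ := by
  rcases hle with ⟨h1, h2⟩ | ⟨h1, h2⟩
  · exact ⟨h1, h2⟩
  · -- v₁ <+: u₂, u₁ <+: v₂ : then u₁, v₁ are comparable, contradiction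
    exfalso
    have hv₁P : v₁ <+: P := h1.trans hu₂
    rcases List.prefix_or_prefix_of_prefix hu₁ hv₁P with h | h
    · exact (N.pair_not_prefix h₁ r₁).1 h
    · exact (N.pair_not_prefix h₁ r₁).2 h

/-- existence of the maximal pair below a leaf pair -/
lemma max_below {N : STM} (hfin : (N.A ∪ N.B).Finite) {P Q : Pos} {e₀ : Sym2 Pos}
    (h₀ : e₀ ∈ N.A ∪ N.B) (hb₀ : Below e₀ P Q) :
    ∃ e' ∈ N.A ∪ N.B, Below e' P Q ∧
      ∀ e ∈ N.A ∪ N.B, Below e P Q → SymLE e e' := by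
  classical
  set C : Set (Sym2 Pos) := {e ∈ N.A ∪ N.B | Below e P Q} with hC
  have hCfin : C.Finite := hfin.subset (fun e he => he.1)
  have hCne : C.Nonempty := ⟨e₀, h₀, hb₀⟩
  obtain ⟨e', he', hmax⟩ := Set.exists_max_image C measS hCfin hCne
  refine ⟨e', he'.1, he'.2, ?_⟩
  intro e he hbe
  obtain ⟨u, v, re, hu, hv⟩ := hbe
  obtain ⟨u', v', re', hu', hv'⟩ := he'.2
  rcases N.chain_below he he'.1 re re' hu hv hu' hv' with h | h
  · exact ⟨u, v, u', v', re, re', h⟩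
  · -- e' ⪯ e: then by maximality they are equal
    by_cases heq : e = e'
    · subst heq
      exact ⟨u, v, u, v, re, re, pairLE_refl u v⟩
    · exfalso
      have hlt : measS e' < measS e :=
        symLE_measS_lt ⟨u', v', u, v, re', re, h⟩ (Ne.symm heq)
      have := hmax e ⟨he, u, v, re, hu, hv⟩
      omega

/-- normal form of adjacency -/
def GoodPair (N : STM) (P Q : Pos) : Prop :=
  ∃ u v : Pos, s(u,v) ∈ N.B ∧ u <+: P ∧ v <+: Q ∧
    ∀ u₂ v₂ : Pos, s(u₂,v₂) ∈ N.A → u₂ <+: P → v₂ <+: Q → PairLE u₂ v₂ u v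

lemma leafAdj_iff {N : STM} (hfin : (N.A ∪ N.B).Finite) (P Q : Pos) :
    N.LeafAdj P Q ↔ (N.tree.IsLeafPos P ∧ N.tree.IsLeafPos Q ∧ N.GoodPair P Q) := by
  constructor
  · rintro ⟨hP, hQ, u', v', hB, hple, hnot⟩
    refine ⟨hP, hQ, ?_⟩
    -- orient e₀
    obtain ⟨a, b, rab, ha, hb⟩ : Below s(u',v') P Q := by
      rcases hple with ⟨h1, h2⟩ | ⟨h1, h2⟩
      · exact ⟨u', v', rfl, h1, h2⟩
      · exact ⟨v', u', Sym2.eq_swap, h1, h2⟩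
    obtain ⟨e', he', ⟨us, vs, res, hus, hvs⟩, hmax⟩ :=
      N.max_below hfin (Or.inr hB) ⟨a, b, rab, ha, hb⟩
    have heB : e' ∈ N.B := by
      rcases he' with heA | heB
      · exfalso
        apply hnot
        refine ⟨us, vs, by rw [← res]; exact heA, ?_, ?_, Or.inl ⟨hus, hvs⟩⟩
        · exact symLE_elim (hmax s(u',v') (Or.inr hB) ⟨a, b, rab, ha, hb⟩) rfl res
        · intro hcontra
          rw [hcontra, ← res] at hB
          exact Set.disjoint_left.mp N.disjAB heA hB
      · exact heB
    refine ⟨us, vs, by rw [← res]; exact heB, hus, hvs, ?_⟩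
    intro u₂ v₂ hA h2P h2Q
    exact symLE_elim (hmax s(u₂,v₂) (Or.inl hA) ⟨u₂, v₂, rfl, h2P, h2Q⟩) rfl res
  · rintro ⟨hP, hQ, u, v, hB, hu, hv, hdom⟩
    refine ⟨hP, hQ, u, v, hB, Or.inl ⟨hu, hv⟩, ?_⟩
    rintro ⟨u₂, v₂, hA, hple2, hne, hple3⟩
    have hanti : ¬ u <+: v ∧ ¬ v <+: u := N.pair_not_prefix (Or.inr hB) rfl
    rcases hple3 with ⟨h1, h2⟩ | ⟨h1, h2⟩
    · exact hne (pairLE_antisymm hanti hple2 (hdom u₂ v₂ hA h1 h2))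
    · have hA' : s(v₂,u₂) ∈ N.A := by rwa [Sym2.eq_swap]
      have := hdom v₂ u₂ hA' h1 h2
      exact hne (pairLE_antisymm hanti hple2 (pairLE_swap₁ this))

end STM

open BinTree

namespace BinTree

/-- monotonicity of intervals under the prefix order -/
lemma ivl_mono {X : BinTree} {p q : Pos} (hq : X.IsNode q) (h : p <+: q) :
    X.lo p ≤ X.lo q ∧ X.lo q + X.sz q ≤ X.lo p + X.sz p := by
  have hp : X.IsNode p := hq.of_prefix h
  obtain ⟨hpre1, hlt1⟩ := self_prefix_pos_lo hq
  have h1 := ((ivl_spec hp (X.lo q)).mp ⟨h.trans hpre1, hlt1⟩).1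
  have hszq := X.sz_pos q
  set k2 := X.lo q + X.sz q - 1 with hk2
  obtain ⟨hpre2, hlt2⟩ := (ivl_spec hq k2).mpr ⟨by omega, by omega⟩
  have h2 := ((ivl_spec hp k2).mp ⟨h.trans hpre2, hlt2⟩).2
  omega

lemma isNode_length_lt {X : BinTree} {p : Pos} (h : X.IsNode p) : p.length < X.depth := by
  induction p generalizing X with
  | nil => exact X.depth_pos'
  | cons b t ih =>
    cases X with
    | leaf => rw [IsNode, subtreeAt] at h; simp at h
    | node l r =>
      cases b with
      | false => have := ih (X := l) h; simp [depth]; omega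
      | true => have := ih (X := r) h; simp [depth]; omega

end BinTree

/-- finiteness of sets of pairs of nodes of a tree -/
lemma finite_pairs {S : Set (Sym2 Pos)} (X : BinTree)
    (h : ∀ e ∈ S, ∀ u v : Pos, e = s(u,v) → X.IsNode u ∧ X.IsNode v) : S.Finite := by
  have hN : {p : Pos | X.IsNode p}.Finite :=
    (List.finite_length_le Bool X.depth).subset
      (fun p hp => le_of_lt (isNode_length_lt hp))
  apply ((hN.prod hN).image (fun w : Pos × Pos => s(w.1, w.2))).subset
  intro e he
  induction e using Sym2.ind with
  | _ u v =>
    obtain ⟨h1, h2⟩ := h _ he u v rfl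
    exact ⟨(u, v), ⟨h1, h2⟩, rfl⟩

/-- the canonical pieces, in `R`, of the leaf interval of the node `u` of `T` -/
def Dd (T R : BinTree) (u : Pos) : List Pos := R.decomp (T.lo u) (T.lo u + T.sz u)

lemma mem_Dd {T R : BinTree} {u x : Pos} (h : x ∈ Dd T R u) :
    R.IsNode x ∧ T.lo u ≤ R.lo x ∧ R.lo x + R.sz x ≤ T.lo u + T.sz u :=
  decomp_isNode h

lemma Dd_maximal {T R : BinTree} {u x : Pos} (h : x ∈ Dd T R u) {q : Pos}
    (hq : R.IsNode q) (hpre : q <+: x) (hne : q ≠ x) :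
    ∃ k, (R.lo q ≤ k ∧ k < R.lo q + R.sz q) ∧ (k < T.lo u ∨ T.lo u + T.sz u ≤ k) :=
  decomp_maximal h hq hpre hne

/-- there is no strict ancestor of a piece of `Dd u` whose interval is inside that of `u` -/
lemma Dd_maximal' {T R : BinTree} {u x : Pos} (h : x ∈ Dd T R u) {q : Pos}
    (hq : R.IsNode q) (hpre : q <+: x) (hne : q ≠ x)
    (hsub : T.lo u ≤ R.lo q ∧ R.lo q + R.sz q ≤ T.lo u + T.sz u) : False := by
  obtain ⟨k, hk1, hk2⟩ := Dd_maximal h hq hpre hne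
  omega

/-- two incomparable nodes of `T` have disjoint intervals -/
lemma disjoint_ivl {T : BinTree} {u v : Pos} (hu : T.IsNode u) (hv : T.IsNode v)
    (h1 : ¬ u <+: v) (h2 : ¬ v <+: u) :
    T.lo u + T.sz u ≤ T.lo v ∨ T.lo v + T.sz v ≤ T.lo u := by
  by_contra hcon
  push_neg at hcon
  set k := max (T.lo u) (T.lo v) with hk
  have hbu := T.sz_pos u
  have hbv := T.sz_pos v
  have hmu := (ivl_spec hu k).mpr ⟨by omega, by omega⟩
  have hmv := (ivl_spec hv k).mpr ⟨by omega, by omega⟩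
  rcases List.prefix_or_prefix_of_prefix hmu.1 hmv.1 with h | h
  · exact h1 h
  · exact h2 h

namespace STM

/-- the transplanted set of edges -/
def Bp (M : STM) (R : BinTree) : Set (Sym2 Pos) :=
  {e' | ∃ u v x y : Pos, e' = s(x,y) ∧ s(u,v) ∈ M.B ∧
    x ∈ Dd M.tree R u ∧ y ∈ Dd M.tree R v ∧
    ∀ u₂ v₂ x₂ y₂ : Pos, s(u₂,v₂) ∈ M.A → x₂ ∈ Dd M.tree R u₂ → y₂ ∈ Dd M.tree R v₂ →
      s(x₂,y₂) = s(x,y) → PairLE u₂ v₂ u v}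

/-- the transplanted set of anti-edges -/
def Ap (M : STM) (R : BinTree) : Set (Sym2 Pos) :=
  {e' | ∃ u v x y : Pos, e' = s(x,y) ∧ s(u,v) ∈ M.A ∧
    x ∈ Dd M.tree R u ∧ y ∈ Dd M.tree R v ∧
    ∀ u₂ v₂ x₂ y₂ : Pos, s(u₂,v₂) ∈ M.B → x₂ ∈ Dd M.tree R u₂ → y₂ ∈ Dd M.tree R v₂ →
      s(x₂,y₂) = s(x,y) → PairLE u₂ v₂ u v}

/-- any element of `Ap ∪ Bp` has a source, in any orientation -/
lemma src_of_mem {M : STM} {R : BinTree} {e' : Sym2 Pos} (h : e' ∈ M.Ap R ∪ M.Bp R)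
    {x y : Pos} (hxy : e' = s(x,y)) :
    ∃ u v : Pos, s(u,v) ∈ M.A ∪ M.B ∧ x ∈ Dd M.tree R u ∧ y ∈ Dd M.tree R v := by
  rcases h with h | h <;>
  · obtain ⟨u, v, x₀, y₀, he, hm, hx₀, hy₀, -⟩ := h
    rw [hxy] at he
    rcases Sym2.eq_iff.mp he with ⟨rfl, rfl⟩ | ⟨rfl, rfl⟩
    · first
        | exact ⟨u, v, Or.inl hm, hx₀, hy₀⟩
        | exact ⟨u, v, Or.inr hm, hx₀, hy₀⟩
    · refine ⟨v, u, ?_, hy₀, hx₀⟩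
      rw [Sym2.eq_swap]
      first
        | exact Or.inl hm
        | exact Or.inr hm

/-- constructed pairs are transversal -/
lemma constructed_transversal {M : STM} {R : BinTree} {u v x y : Pos}
    (hm : s(u,v) ∈ M.A ∪ M.B) (hx : x ∈ Dd M.tree R u) (hy : y ∈ Dd M.tree R v) :
    Transversal R x y := by
  obtain ⟨hnu, hnv, hp1, hp2⟩ := M.transversal _ hm u v rfl
  obtain ⟨hxn, hxl, hxr⟩ := mem_Dd hx
  obtain ⟨hyn, hyl, hyr⟩ := mem_Dd hy
  have hdisj := disjoint_ivl hnu hnv hp1 hp2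
  have hszx := R.sz_pos x
  have hszy := R.sz_pos y
  refine ⟨hxn, hyn, ?_, ?_⟩
  · intro hpre
    have := ivl_mono hyn hpre
    omega
  · intro hpre
    have := ivl_mono hxn hpre
    omega

lemma constructed_noCross {M : STM} {R : BinTree} {e₁ e₂ : Sym2 Pos}
    (h₁ : e₁ ∈ M.Ap R ∪ M.Bp R) (h₂ : e₂ ∈ M.Ap R ∪ M.Bp R) {x y x' y' : Pos}
    (r₁ : e₁ = s(x,y)) (r₂ : e₂ = s(x',y')) : ¬ (SAnc x x' ∧ SAnc y' y) := by
  rintro ⟨⟨hxx', hxne⟩, ⟨hy'y, hyne⟩⟩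
  obtain ⟨u₁, v₁, hm₁, hx₁, hy₁⟩ := src_of_mem h₁ r₁
  obtain ⟨u₂, v₂, hm₂, hx₂, hy₂⟩ := src_of_mem h₂ r₂
  obtain ⟨hnu₁, hnv₁, -, -⟩ := M.transversal _ hm₁ u₁ v₁ rfl
  obtain ⟨hnu₂, hnv₂, -, -⟩ := M.transversal _ hm₂ u₂ v₂ rfl
  obtain ⟨hxn, hxl, hxr⟩ := mem_Dd hx₁
  obtain ⟨hyn, hyl, hyr⟩ := mem_Dd hy₁
  obtain ⟨hxn', hxl', hxr'⟩ := mem_Dd hx₂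
  obtain ⟨hyn', hyl', hyr'⟩ := mem_Dd hy₂
  -- the interval of x' is inside the interval of x
  have hmx := ivl_mono hxn' hxx'
  have hmy := ivl_mono hyn hy'y
  have hszx' := R.sz_pos x'
  have hszy := R.sz_pos y
  -- u₁ and u₂ are comparable
  have hcmp : u₁ <+: u₂ ∨ u₂ <+: u₁ := by
    set k := R.lo x' with hk
    have m1 := (ivl_spec hnu₁ k).mpr ⟨by omega, by omega⟩
    have m2 := (ivl_spec hnu₂ k).mpr ⟨by omega, by omega⟩
    exact List.prefix_or_prefix_of_prefix m1.1 m2.1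
  have hu12 : u₁ <+: u₂ ∧ u₁ ≠ u₂ := by
    rcases hcmp with h | h
    · refine ⟨h, ?_⟩
      rintro rfl
      -- x is a strict ancestor of x' inside the interval of u₁ = u₂
      exact Dd_maximal' hx₂ hxn hxx' hxne ⟨by omega, by omega⟩
    · exfalso
      have := ivl_mono hnu₁ h
      exact Dd_maximal' hx₂ hxn hxx' hxne ⟨by omega, by omega⟩
  -- v₂ and v₁ are comparable
  have hcmpv : v₁ <+: v₂ ∨ v₂ <+: v₁ := by
    set k := R.lo y with hk
    have m1 := (ivl_spec hnv₁ k).mpr ⟨by omega, by omega⟩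
    have m2 := (ivl_spec hnv₂ k).mpr ⟨by omega, by omega⟩
    exact List.prefix_or_prefix_of_prefix m1.1 m2.1
  have hv21 : v₂ <+: v₁ ∧ v₂ ≠ v₁ := by
    rcases hcmpv with h | h
    · exfalso
      have := ivl_mono hnv₂ h
      exact Dd_maximal' hy₁ hyn' hy'y hyne ⟨by omega, by omega⟩
    · refine ⟨h, ?_⟩
      rintro rfl
      exact Dd_maximal' hy₁ hyn' hy'y hyne ⟨by omega, by omega⟩
  exact M.noCross _ hm₁ _ hm₂ u₁ v₁ u₂ v₂ rfl rfl ⟨⟨hu12.1, hu12.2⟩, ⟨hv21.1, hv21.2⟩⟩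

lemma constructed_disjoint (M : STM) (R : BinTree) : Disjoint (M.Ap R) (M.Bp R) := by
  rw [Set.disjoint_left]
  rintro e' ⟨ua, va, xa, ya, rea, hA, hxa, hya, hdomB⟩ ⟨ub, vb, xb, yb, reb, hB, hxb, hyb, hdomA⟩
  have hel : s(xb, yb) = s(xa, ya) := by rw [← rea, ← reb]
  have h1 : PairLE ub vb ua va := hdomB ub vb xb yb hB hxb hyb hel
  have h2 : PairLE ua va ub vb := hdomA ua va xa ya hA hxa hya hel.symm
  have hanti := pairLE_antisymm (M.pair_not_prefix (Or.inl hA) rfl) h2 h1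
  rw [hanti] at hA
  exact Set.disjoint_left.mp M.disjAB hA hB

lemma constructed_transversal' (M : STM) (R : BinTree) :
    ∀ e ∈ M.Ap R ∪ M.Bp R, ∀ x y : Pos, e = s(x,y) → Transversal R x y := by
  intro e he x y hxy
  obtain ⟨u, v, hm, hx, hy⟩ := src_of_mem he hxy
  exact constructed_transversal hm hx hy

/-- the balanced signed tree model -/
def balanced (M : STM) (R : BinTree) : STM where
  tree := R
  A := M.Ap R
  B := M.Bp R
  disjAB := constructed_disjoint M R
  transversal := constructed_transversal' M R
  noCross := by
    intro e he e' he' u v u' v' hr hr'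
    exact constructed_noCross he he' hr hr'

lemma balanced_finite (M : STM) (R : BinTree) :
    ((M.balanced R).A ∪ (M.balanced R).B).Finite :=
  finite_pairs R (fun e he u v hr => by
    obtain ⟨h1, h2, -, -⟩ := constructed_transversal' M R e he u v hr
    exact ⟨h1, h2⟩)

lemma stm_finite (M : STM) : (M.A ∪ M.B).Finite :=
  finite_pairs M.tree (fun e he u v hr => by
    obtain ⟨h1, h2, -, -⟩ := M.transversal e he u v hr
    exact ⟨h1, h2⟩)

end STM

open BinTree

lemma orient' {P u₁ v₁ u₂ v₂ : Pos} (h₁ : ¬ u₁ <+: v₁ ∧ ¬ v₁ <+: u₁)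
    (hu₁ : u₁ <+: P) (hu₂ : u₂ <+: P) (hle : PairLE u₁ v₁ u₂ v₂) :
    u₁ <+: u₂ ∧ v₁ <+: v₂ := by
  rcases hle with ⟨h1, h2⟩ | ⟨h1, h2⟩
  · exact ⟨h1, h2⟩
  · exfalso
    rcases List.prefix_or_prefix_of_prefix hu₁ (h1.trans hu₂) with h | h
    · exact h₁.1 h
    · exact h₁.2 h

lemma Dd_to_leaf {T R : BinTree} {u x P : Pos} (hTR : T.nl = R.nl) (hu : T.IsNode u)
    (hP : T.IsLeafPos P) (hx : x ∈ Dd T R u) (hxp : x <+: R.pos (T.lo P)) : u <+: P := by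
  have hka : T.lo P < T.nl := (leafPos_eq_pos hP).2
  have hPeq : P = T.pos (T.lo P) := (leafPos_eq_pos hP).1
  obtain ⟨hxn, hxl, hxr⟩ := mem_Dd hx
  have h2 := (prefix_pos_iff hxn (show T.lo P < R.nl by omega)).mp hxp
  rw [hPeq]
  exact ((ivl_spec hu (T.lo P)).mpr ⟨by omega, by omega⟩).1

lemma leaf_to_Dd {T R : BinTree} {u P : Pos} (hTR : T.nl = R.nl) (hu : T.IsNode u)
    (hP : T.IsLeafPos P) (hup : u <+: P) : ∃ x ∈ Dd T R u, x <+: R.pos (T.lo P) := by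
  have hka : T.lo P < T.nl := (leafPos_eq_pos hP).2
  have hPeq : P = T.pos (T.lo P) := (leafPos_eq_pos hP).1
  have hmem := (ivl_spec hu (T.lo P)).mp ⟨by rw [← hPeq]; exact hup, hka⟩
  exact decomp_cover (X := R) (show T.lo P < R.nl by omega) hmem.1 hmem.2

namespace STM

theorem bridge (M : STM) (R : BinTree) (hTR : M.tree.nl = R.nl)
    {P Q : Pos} (hP : M.tree.IsLeafPos P) (hQ : M.tree.IsLeafPos Q) :
    M.GoodPair P Q ↔
      (M.balanced R).GoodPair (R.pos (M.tree.lo P)) (R.pos (M.tree.lo Q)) := by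
  set T := M.tree with hT
  set p := R.pos (T.lo P) with hp
  set q := R.pos (T.lo Q) with hq
  constructor
  · rintro ⟨u, v, hB, huP, hvQ, hdom⟩
    have hnu : T.IsNode u := (M.transversal _ (Or.inr hB) u v rfl).1
    have hnv : T.IsNode v := (M.transversal _ (Or.inr hB) u v rfl).2.1
    obtain ⟨x, hxD, hxp⟩ := leaf_to_Dd hTR hnu hP huP
    obtain ⟨y, hyD, hyq⟩ := leaf_to_Dd hTR hnv hQ hvQ
    refine ⟨x, y, ?_, hxp, hyq, ?_⟩
    · -- s(x,y) ∈ Bp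
      refine ⟨u, v, x, y, rfl, hB, hxD, hyD, ?_⟩
      intro u₂ v₂ x₂ y₂ hA₂ hx₂ hy₂ heq
      have hnu₂ : T.IsNode u₂ := (M.transversal _ (Or.inl hA₂) u₂ v₂ rfl).1
      have hnv₂ : T.IsNode v₂ := (M.transversal _ (Or.inl hA₂) u₂ v₂ rfl).2.1
      rcases Sym2.eq_iff.mp heq with ⟨rfl, rfl⟩ | ⟨h1, h2⟩
      · exact hdom u₂ v₂ hA₂ (Dd_to_leaf hTR hnu₂ hP hx₂ hxp)
          (Dd_to_leaf hTR hnv₂ hQ hy₂ hyq)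
      · subst h1; subst h2
        exact pairLE_swap₁ (hdom v₂ u₂ (by rwa [Sym2.eq_swap])
          (Dd_to_leaf hTR hnv₂ hP hy₂ hxp) (Dd_to_leaf hTR hnu₂ hQ hx₂ hyq))
    · -- domination over Ap
      rintro x₂ y₂ hA' hx₂p hy₂q
      obtain ⟨u', v', hmA, hx₂D, hy₂D⟩ :
          ∃ u' v', s(u',v') ∈ M.A ∧ x₂ ∈ Dd T R u' ∧ y₂ ∈ Dd T R v' := by
        obtain ⟨u₃, v₃, x₃, y₃, re₃, hA₃, hx₃, hy₃, -⟩ := hA'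
        rcases Sym2.eq_iff.mp re₃.symm with ⟨rfl, rfl⟩ | ⟨h1, h2⟩
        · exact ⟨u₃, v₃, hA₃, hx₃, hy₃⟩
        · subst h1; subst h2
          exact ⟨v₃, u₃, by rwa [Sym2.eq_swap], hy₃, hx₃⟩
      have hnu' : T.IsNode u' := (M.transversal _ (Or.inl hmA) u' v' rfl).1
      have hnv' : T.IsNode v' := (M.transversal _ (Or.inl hmA) u' v' rfl).2.1
      have hu'P : u' <+: P := Dd_to_leaf hTR hnu' hP hx₂D hx₂p
      have hv'Q : v' <+: Q := Dd_to_leaf hTR hnv' hQ hy₂D hy₂q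
      have hor : u' <+: u ∧ v' <+: v :=
        orient' (M.pair_not_prefix (Or.inl hmA) rfl) hu'P huP
          (hdom u' v' hmA hu'P hv'Q)
      have hIu := ivl_mono (X := T) hnu hor.1
      have hIv := ivl_mono (X := T) hnv hor.2
      obtain ⟨hxn, hxl, hxr⟩ := mem_Dd hxD
      obtain ⟨hyn, hyl, hyr⟩ := mem_Dd hyD
      have hx₂x : x₂ <+: x := by
        rcases List.prefix_or_prefix_of_prefix hx₂p hxp with h | h
        · exact h
        · by_cases hxe : x = x₂
          · rw [← hxe]
          · exact absurd (Dd_maximal' hx₂D hxn h hxe ⟨by omega, by omega⟩) not_false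
      have hy₂y : y₂ <+: y := by
        rcases List.prefix_or_prefix_of_prefix hy₂q hyq with h | h
        · exact h
        · by_cases hye : y = y₂
          · rw [← hye]
          · exact absurd (Dd_maximal' hy₂D hyn h hye ⟨by omega, by omega⟩) not_false
      exact Or.inl ⟨hx₂x, hy₂y⟩
  · rintro ⟨x, y, hB', hxp, hyq, hdom'⟩
    obtain ⟨u, v, hmB, hxD, hyD, hclauseA⟩ :
        ∃ u v, s(u,v) ∈ M.B ∧ x ∈ Dd T R u ∧ y ∈ Dd T R v ∧
          ∀ u₂ v₂ x₂ y₂ : Pos, s(u₂,v₂) ∈ M.A → x₂ ∈ Dd T R u₂ → y₂ ∈ Dd T R v₂ →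
            s(x₂,y₂) = s(x,y) → PairLE u₂ v₂ u v := by
      obtain ⟨ub, vb, xb, yb, reb, hBb, hxb, hyb, hcb⟩ := hB'
      rcases Sym2.eq_iff.mp reb with ⟨rfl, rfl⟩ | ⟨h1, h2⟩
      · exact ⟨ub, vb, hBb, hxb, hyb, hcb⟩
      · subst h1; subst h2
        refine ⟨vb, ub, by rwa [Sym2.eq_swap], hyb, hxb, ?_⟩
        intro u₂ v₂ x₂ y₂ hA hx₂ hy₂ heq
        exact pairLE_swap₂ (hcb u₂ v₂ x₂ y₂ hA hx₂ hy₂ (heq.trans Sym2.eq_swap))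
    have hnu : T.IsNode u := (M.transversal _ (Or.inr hmB) u v rfl).1
    have hnv : T.IsNode v := (M.transversal _ (Or.inr hmB) u v rfl).2.1
    have huP : u <+: P := Dd_to_leaf hTR hnu hP hxD hxp
    have hvQ : v <+: Q := Dd_to_leaf hTR hnv hQ hyD hyq
    obtain ⟨es, hesm, ⟨us, vs, res, husP, hvsQ⟩, hmax⟩ :=
      M.max_below M.stm_finite (Or.inr hmB) ⟨u, v, rfl, huP, hvQ⟩
    rcases hesm with hesA | hesB
    · -- maximal pair is an anti-edge: contradiction
      exfalso
      have hAs : s(us,vs) ∈ M.A := by rwa [← res]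
      have hnus : T.IsNode us := (M.transversal _ (Or.inl hAs) us vs rfl).1
      have hnvs : T.IsNode vs := (M.transversal _ (Or.inl hAs) us vs rfl).2.1
      obtain ⟨xs, hxsD, hxsp⟩ := leaf_to_Dd hTR hnus hP husP
      obtain ⟨ys, hysD, hysq⟩ := leaf_to_Dd hTR hnvs hQ hvsQ
      have hApmem : s(xs,ys) ∈ M.Ap R := by
        refine ⟨us, vs, xs, ys, rfl, hAs, hxsD, hysD, ?_⟩
        intro u₄ v₄ x₄ y₄ hB₄ hx₄ hy₄ heq₄
        have hnu₄ : T.IsNode u₄ := (M.transversal _ (Or.inr hB₄) u₄ v₄ rfl).1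
        have hnv₄ : T.IsNode v₄ := (M.transversal _ (Or.inr hB₄) u₄ v₄ rfl).2.1
        rcases Sym2.eq_iff.mp heq₄ with ⟨rfl, rfl⟩ | ⟨h1, h2⟩
        · have h4P := Dd_to_leaf hTR hnu₄ hP hx₄ hxsp
          have h4Q := Dd_to_leaf hTR hnv₄ hQ hy₄ hysq
          exact symLE_elim (hmax s(u₄,v₄) (Or.inr hB₄) ⟨u₄, v₄, rfl, h4P, h4Q⟩) rfl res
        · subst h1; subst h2
          have h4Q := Dd_to_leaf hTR hnu₄ hQ hx₄ hysq
          have h4P := Dd_to_leaf hTR hnv₄ hP hy₄ hxsp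
          exact pairLE_swap₁ (symLE_elim
            (hmax s(u₄,v₄) (Or.inr hB₄) ⟨v₄, u₄, Sym2.eq_swap, h4P, h4Q⟩) Sym2.eq_swap res)
      have hplexy : PairLE xs ys x y := hdom' xs ys hApmem hxsp hysq
      have hxytrans := constructed_transversal (Or.inl hAs) hxsD hysD
      have hor := orient' ⟨hxytrans.2.2.1, hxytrans.2.2.2⟩ hxsp hxp hplexy
      have hple2 : PairLE u v us vs :=
        symLE_elim (hmax s(u,v) (Or.inr hmB) ⟨u, v, rfl, huP, hvQ⟩) rfl res
      have hor2 := orient' (M.pair_not_prefix (Or.inr hmB) rfl) huP husP hple2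
      have hIu := ivl_mono (X := T) hnus hor2.1
      have hIv := ivl_mono (X := T) hnvs hor2.2
      obtain ⟨hxsn, hxsl, hxsr⟩ := mem_Dd hxsD
      obtain ⟨hysn, hysl, hysr⟩ := mem_Dd hysD
      have hxseq : xs = x := by
        by_cases h : xs = x
        · exact h
        · exact absurd (Dd_maximal' hxD hxsn hor.1 h ⟨by omega, by omega⟩) not_false
      have hyseq : ys = y := by
        by_cases h : ys = y
        · exact h
        · exact absurd (Dd_maximal' hyD hysn hor.2 h ⟨by omega, by omega⟩) not_false
      have hfin : PairLE us vs u v := by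
        apply hclauseA us vs x y hAs
        · rw [← hxseq]; exact hxsD
        · rw [← hyseq]; exact hysD
        · rfl
      have hanti := pairLE_antisymm (M.pair_not_prefix (Or.inr hmB) rfl) hple2 hfin
      rw [hanti] at hmB
      exact Set.disjoint_left.mp M.disjAB hAs hmB
    · -- maximal pair is an edge: it witnesses GoodPair
      refine ⟨us, vs, by rwa [← res], husP, hvsQ, ?_⟩
      intro u₂ v₂ hA h2P h2Q
      exact symLE_elim (hmax s(u₂,v₂) (Or.inl hA) ⟨u₂, v₂, rfl, h2P, h2Q⟩) rfl res

end STM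

open BinTree

/-- the finset of candidate transplanted pairs arising from one original pair -/
noncomputable def pairFinset (T R : BinTree) : Sym2 Pos → Finset (Sym2 Pos) := by
  classical
  exact Sym2.lift ⟨fun u v => ((Dd T R u).toFinset ×ˢ (Dd T R v).toFinset).image
      (fun w : Pos × Pos => s(w.1, w.2)), by
    intro u v
    ext e
    simp only [Finset.mem_image, Finset.mem_product, List.mem_toFinset, Prod.exists]
    constructor
    · rintro ⟨a, b, ⟨ha, hb⟩, rfl⟩
      exact ⟨b, a, ⟨hb, ha⟩, Sym2.eq_swap⟩
    · rintro ⟨a, b, ⟨ha, hb⟩, rfl⟩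
      exact ⟨b, a, ⟨hb, ha⟩, Sym2.eq_swap⟩⟩

lemma mem_pairFinset {T R : BinTree} {u v : Pos} {e' : Sym2 Pos} :
    e' ∈ pairFinset T R s(u,v) ↔ ∃ x ∈ Dd T R u, ∃ y ∈ Dd T R v, e' = s(x,y) := by
  classical
  simp only [pairFinset, Sym2.lift_mk, Finset.mem_image, Finset.mem_product,
    List.mem_toFinset, Prod.exists]
  constructor
  · rintro ⟨a, b, ⟨ha, hb⟩, rfl⟩
    exact ⟨a, ha, b, hb, rfl⟩
  · rintro ⟨a, ha, b, hb, rfl⟩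
    exact ⟨a, b, ⟨ha, hb⟩, rfl⟩

lemma pairFinset_card_le {T R : BinTree} (hRc : R.IsComplete) (hn : 2 ≤ R.nl)
    (e : Sym2 Pos) : ((pairFinset T R e).card : ℝ) ≤ (2 * Real.logb 2 R.nl) ^ 2 := by
  classical
  induction e using Sym2.ind with
  | _ u v =>
    have hb1 := decomp_card_le hRc hn (T.lo u) (T.lo u + T.sz u)
    have hb2 := decomp_card_le hRc hn (T.lo v) (T.lo v + T.sz v)
    have hcard : (pairFinset T R s(u,v)).card ≤ (Dd T R u).length * (Dd T R v).length := by
      calc (pairFinset T R s(u,v)).card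
          ≤ ((Dd T R u).toFinset ×ˢ (Dd T R v).toFinset).card := by
            rw [pairFinset]
            simp only [Sym2.lift_mk]
            exact Finset.card_image_le
      _ = (Dd T R u).toFinset.card * (Dd T R v).toFinset.card := Finset.card_product _ _
      _ ≤ (Dd T R u).length * (Dd T R v).length :=
            Nat.mul_le_mul (List.toFinset_card_le _) (List.toFinset_card_le _)
    have h0 : (0:ℝ) ≤ ((Dd T R v).length : ℝ) := by positivity
    have h0' : (0:ℝ) ≤ 2 * Real.logb 2 R.nl := by
      have := one_le_logb hn
      linarith
    calc ((pairFinset T R s(u,v)).card : ℝ)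
        ≤ ((Dd T R u).length : ℝ) * ((Dd T R v).length : ℝ) := by exact_mod_cast hcard
    _ ≤ (2 * Real.logb 2 R.nl) * (2 * Real.logb 2 R.nl) := by
          apply mul_le_mul hb1 hb2 h0 h0'
    _ = (2 * Real.logb 2 R.nl) ^ 2 := by ring

lemma balanced_card_le (M : STM) (R : BinTree) (hRc : R.IsComplete) (hn : 2 ≤ R.nl) :
    (((M.balanced R).A ∪ (M.balanced R).B).ncard : ℝ) ≤
      ((M.A ∪ M.B).ncard : ℝ) * (2 * Real.logb 2 R.nl) ^ 2 := by
  classical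
  have hfin := M.stm_finite
  set K := hfin.toFinset with hK
  have hsub : (M.balanced R).A ∪ (M.balanced R).B ⊆ ↑(K.biUnion (pairFinset M.tree R)) := by
    rintro e' (⟨u, v, x, y, re, hm, hx, hy, -⟩ | ⟨u, v, x, y, re, hm, hx, hy, -⟩) <;>
    · simp only [Finset.coe_biUnion, Set.mem_iUnion, Finset.mem_coe]
      refine ⟨s(u,v), by simp only [hK, hfin.mem_toFinset]; first
        | exact Or.inl hm | exact Or.inr hm, ?_⟩
      exact mem_pairFinset.mpr ⟨x, hx, y, hy, re⟩
  have h1 : ((M.balanced R).A ∪ (M.balanced R).B).ncard ≤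
      (K.biUnion (pairFinset M.tree R)).card := by
    have := Set.ncard_le_ncard hsub (Finset.finite_toSet _)
    rwa [Set.ncard_coe_finset] at this
  have h2 := Finset.card_biUnion_le (s := K) (t := pairFinset M.tree R)
  have h3 : ((∑ e ∈ K, (pairFinset M.tree R e).card : ℕ) : ℝ) ≤
      (K.card : ℝ) * (2 * Real.logb 2 R.nl) ^ 2 := by
    push_cast
    calc ∑ e ∈ K, ((pairFinset M.tree R e).card : ℝ)
        ≤ ∑ _e ∈ K, (2 * Real.logb 2 R.nl) ^ 2 :=
          Finset.sum_le_sum (fun e _ => pairFinset_card_le hRc hn e)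
    _ = (K.card : ℝ) * (2 * Real.logb 2 R.nl) ^ 2 := by
          rw [Finset.sum_const, nsmul_eq_mul]
  have hKcard : K.card = (M.A ∪ M.B).ncard := (Set.ncard_eq_toFinset_card _ hfin).symm
  calc (((M.balanced R).A ∪ (M.balanced R).B).ncard : ℝ)
      ≤ ((K.biUnion (pairFinset M.tree R)).card : ℝ) := by exact_mod_cast h1
  _ ≤ ((∑ e ∈ K, (pairFinset M.tree R e).card : ℕ) : ℝ) := by exact_mod_cast h2
  _ ≤ (K.card : ℝ) * (2 * Real.logb 2 R.nl) ^ 2 := h3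
  _ = ((M.A ∪ M.B).ncard : ℝ) * (2 * Real.logb 2 R.nl) ^ 2 := by rw [hKcard]

open BinTree

/-- Balancing: if an `n`-vertex graph `G` (with `n ≥ 2`) has a clean `d`-sparse signed tree
model, then it has a `4d·(log₂ n)²`-sparse signed tree model whose tree is the full complete
binary rooted tree with `n` leaves, of depth `⌈log₂ n⌉ + 1`. -/
theorem balance_stm (n : ℕ) (hn : 2 ≤ n) (G : SimpleGraph (Fin n)) (d : ℕ)
    (M : STM) (hM : M.Models G) (hclean : M.Clean)
    (hsparse : (M.A ∪ M.B).ncard ≤ d * M.tree.numNodes) :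
    ∃ M' : STM, M'.Models G ∧ BinTree.IsComplete M'.tree ∧
      M'.tree.leaves.length = n ∧ M'.tree.depth = Nat.clog 2 n + 1 ∧
      ((M'.A ∪ M'.B).ncard : ℝ) ≤ 4 * d * (Real.logb 2 n) ^ 2 * M'.tree.numNodes := by
  classical
  obtain ⟨f, finj, fleaf, fsurj, hadj⟩ := hM
  set T := M.tree with hTdef
  have hka : ∀ a : Fin n, T.lo (f a) < T.nl := fun a => (leafPos_eq_pos (fleaf a)).2
  have hfeq : ∀ a : Fin n, f a = T.pos (T.lo (f a)) := fun a => (leafPos_eq_pos (fleaf a)).1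
  have hTn : T.nl = n := by
    have hle1 : n ≤ T.nl := by
      have hinj : Function.Injective (fun a : Fin n => (⟨T.lo (f a), hka a⟩ : Fin T.nl)) := by
        intro a b h
        apply finj
        rw [hfeq a, hfeq b]
        have : T.lo (f a) = T.lo (f b) := by simpa using congrArg Fin.val h
        rw [this]
      simpa using Fintype.card_le_of_injective _ hinj
    have hle2 : T.nl ≤ n := by
      choose g hg using fun k : Fin T.nl => fsurj (T.pos k) (T.pos_isLeafPos k k.2)
      have hinj : Function.Injective g := by
        intro k k' h
        apply Fin.ext
        apply pos_inj (X := T) k.2 k'.2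
        rw [← hg k, ← hg k', h]
      simpa using Fintype.card_le_of_injective _ hinj
    omega
  set R := cbt n with hRdef
  obtain ⟨hRnl, hRdep, hRcomp, -⟩ := cbt_spec n (by omega)
  have hTR : T.nl = R.nl := by rw [hTn, hRnl]
  have hn2 : 2 ≤ R.nl := by rw [hRnl]; omega
  have hfinM := M.stm_finite
  have hfinM' := M.balanced_finite R
  refine ⟨M.balanced R, ?_, hRcomp, by rw [show (M.balanced R).tree = R from rfl,
    leaves_length, hRnl], by rw [show (M.balanced R).tree = R from rfl, hRdep], ?_⟩
  · -- Models
    refine ⟨fun a => R.pos (T.lo (f a)), ?_, ?_, ?_, ?_⟩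
    · intro a b h
      apply finj
      rw [hfeq a, hfeq b]
      have : T.lo (f a) = T.lo (f b) :=
        pos_inj (X := R) (by have := hka a; omega) (by have := hka b; omega) h
      rw [this]
    · intro a
      exact R.pos_isLeafPos _ (by have := hka a; omega)
    · intro p hp
      have hp' : R.IsLeafPos p := hp
      have hk : R.lo p < R.nl := (leafPos_eq_pos hp').2
      have hk' : R.lo p < T.nl := by omega
      obtain ⟨a, ha⟩ := fsurj (T.pos (R.lo p)) (T.pos_isLeafPos _ hk')
      refine ⟨a, ?_⟩
      show R.pos (T.lo (f a)) = p
      rw [ha, lo_pos hk', ← (leafPos_eq_pos hp').1]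
    · intro a b
      rw [hadj a b, STM.leafAdj_iff hfinM (f a) (f b),
        STM.leafAdj_iff hfinM' (R.pos (T.lo (f a))) (R.pos (T.lo (f b)))]
      have hbr := M.bridge R hTR (fleaf a) (fleaf b)
      constructor
      · rintro ⟨-, -, hg⟩
        exact ⟨R.pos_isLeafPos _ (by have := hka a; omega),
          R.pos_isLeafPos _ (by have := hka b; omega), hbr.mp hg⟩
      · rintro ⟨-, -, hg⟩
        exact ⟨fleaf a, fleaf b, hbr.mpr hg⟩
  · -- counting
    have hc := balanced_card_le M R hRcomp hn2
    have hnumeq : T.numNodes = R.numNodes := by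
      rw [numNodes_eq, numNodes_eq, hTn, hRnl]
    have hsp2 : (M.A ∪ M.B).ncard ≤ d * R.numNodes := by
      rw [← hnumeq]; exact hsparse
    have hsq : (0:ℝ) ≤ (2 * Real.logb 2 (R.nl : ℕ)) ^ 2 := sq_nonneg _
    calc (((M.balanced R).A ∪ (M.balanced R).B).ncard : ℝ)
        ≤ ((M.A ∪ M.B).ncard : ℝ) * (2 * Real.logb 2 (R.nl : ℕ)) ^ 2 := hc
    _ ≤ ((d * R.numNodes : ℕ) : ℝ) * (2 * Real.logb 2 (R.nl : ℕ)) ^ 2 := by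
        apply mul_le_mul_of_nonneg_right _ hsq
        exact_mod_cast hsp2
    _ = 4 * d * (Real.logb 2 n) ^ 2 * ((M.balanced R).tree.numNodes : ℕ) := by
        rw [hRnl, show (M.balanced R).tree = R from rfl]
        push_cast
        ring
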